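/- For η > 1 and u ≥ 1, the variance of interference at a boundary point at distance u from the corner equals 2λ · (2πη Γ(η) − u^{2−2η} √π Γ(η − 1/2)) / (4 Γ(η)(η−1)). -/

import Mathlib

open MeasureTheory Real Filter Set intervalIntegral

lemma realBeta (a b : ℝ) (ha : 0 < a) (hb : 0 < b) :
    ∫ x in (0:ℝ)..1, x ^ (a-1) * (1-x) ^ (b-1)
      = Real.Gamma a * Real.Gamma b / Real.Gamma (a+b) := by
  have h := Complex.Gamma_mul_Gamma_eq_betaIntegral (s := (a:ℂ)) (t := (b:ℂ))
    (by simpa using ha) (by simpa using hb)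
  have hbeta : Complex.betaIntegral a b
      = ((∫ x in (0:ℝ)..1, x ^ (a-1) * (1-x) ^ (b-1) : ℝ) : ℂ) := by
    rw [Complex.betaIntegral, ← intervalIntegral.integral_ofReal]
    apply intervalIntegral.integral_congr
    intro x hx
    rw [Set.uIcc_of_le (by norm_num : (0:ℝ) ≤ 1)] at hx
    obtain ⟨hx0, hx1⟩ := hx
    push_cast
    rw [Complex.ofReal_cpow hx0, Complex.ofReal_cpow (by linarith)]
    push_cast
    ring
  have hne : Complex.Gamma (a + b) ≠ 0 := by
    rw [show ((a:ℂ) + b) = ((a+b : ℝ) : ℂ) by push_cast; ring, Complex.Gamma_ofReal]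
    simpa using (Real.Gamma_pos_of_pos (by linarith)).ne'
  rw [hbeta] at h
  have : ((Real.Gamma a * Real.Gamma b : ℝ) : ℂ)
      = ((Real.Gamma (a+b) * ∫ x in (0:ℝ)..1, x ^ (a-1) * (1-x) ^ (b-1) : ℝ) : ℂ) := by
    push_cast
    rw [← Complex.Gamma_ofReal, ← Complex.Gamma_ofReal, ← Complex.Gamma_ofReal] at *
    push_cast at h ⊢
    rw [h]
  have h2 := Complex.ofReal_inj.mp this
  have hg : Real.Gamma (a+b) ≠ 0 := (Real.Gamma_pos_of_pos (by linarith)).ne'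
  field_simp
  linarith [h2]

lemma realBetaIoo (a b : ℝ) (ha : 0 < a) (hb : 0 < b) :
    ∫ x in Set.Ioo (0:ℝ) 1, x ^ (a-1) * (1-x) ^ (b-1)
      = Real.Gamma a * Real.Gamma b / Real.Gamma (a+b) := by
  rw [← realBeta a b ha hb, intervalIntegral.integral_of_le (by norm_num : (0:ℝ) ≤ 1),
    MeasureTheory.integral_Ioc_eq_integral_Ioo]

lemma realBetaIntegrable (a b : ℝ) (ha : 0 < a) (hb : 0 < b) :
    IntegrableOn (fun x : ℝ => x ^ (a-1) * (1-x) ^ (b-1)) (Set.Ioo (0:ℝ) 1) := by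
  have h := (Complex.betaIntegral_convergent (u := (a:ℂ)) (v := (b:ℂ))
    (by simpa using ha) (by simpa using hb)).norm
  rw [intervalIntegrable_iff_integrableOn_Ioc_of_le (by norm_num : (0:ℝ) ≤ 1)] at h
  refine ((h.mono_set Set.Ioo_subset_Ioc_self).congr_fun (fun x hx => ?_) measurableSet_Ioo)
  obtain ⟨hx0, hx1⟩ := hx
  beta_reduce
  rw [norm_mul,
    Complex.norm_cpow_eq_rpow_re_of_pos hx0,
    show ((1:ℂ) - x) = (((1 - x : ℝ)):ℂ) by push_cast; ring,
    Complex.norm_cpow_eq_rpow_re_of_pos (by linarith)]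
  norm_num

set_option maxHeartbeats 4000000 in
/-- Closed form for the variance of interference at a boundary point at distance u ≥ 1 from
the corner: V(u) = 2λ (2πη Γ(η) − u^{2−2η} √π Γ(η − 1/2)) / (4 Γ(η)(η−1)). -/
theorem variance_interference_boundary_closed_form (η lam u : ℝ) (hη : 1 < η) (hlam : 0 < lam)
    (hu : 1 ≤ u) :
    2 * lam * ∫ r in Set.Ioi (0:ℝ),
        ∫ _φ in Set.Ioo (0:ℝ) (if r ≤ u then π else π - Real.arccos (u / r)),
          (min 1 (r ^ (-η)))^2 * r
      = 2 * lam * (2 * π * η * Real.Gamma η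
            - u ^ (2 - 2 * η) * Real.sqrt π * Real.Gamma (η - 1/2))
          / (4 * Real.Gamma η * (η - 1)) := by
  have hu0 : (0:ℝ) < u := by linarith
  set e : ℝ := 2 - 2*η with he
  clear_value e
  set f : ℝ → ℝ := fun x => u * x ^ (-(1/2) : ℝ) with hf
  set f' : ℝ → ℝ := fun x => u * (-(1/2) * x ^ ((-(1/2) : ℝ)-1)) with hf'
  set G : ℝ → ℝ := fun r => u * r ^ (e-2) * (1 - (u/r)^2) ^ (-(1/2) : ℝ) with hG
  -- image
  have himg : f '' Set.Ioo (0:ℝ) 1 = Set.Ioi u := by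
    ext y
    simp only [Set.mem_image, Set.mem_Ioo, Set.mem_Ioi]
    constructor
    · rintro ⟨x, ⟨hx0, hx1⟩, rfl⟩
      have h1 : 1 < x ^ (-(1/2) : ℝ) :=
        (Real.one_lt_rpow_iff_of_pos hx0).mpr (Or.inr ⟨hx1, by norm_num⟩)
      calc u = u * 1 := by ring
      _ < u * x ^ (-(1/2):ℝ) := by exact mul_lt_mul_of_pos_left h1 hu0
    · intro hy
      have hy0 : 0 < y := lt_trans hu0 hy
      refine ⟨(u/y)^2, ⟨by positivity, ?_⟩, ?_⟩
      · have : u/y < 1 := (div_lt_one hy0).mpr hy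
        have h0 : 0 < u/y := by positivity
        nlinarith
      · show u * (((u/y)^2 : ℝ)) ^ (-(1/2):ℝ) = y
        rw [Real.rpow_neg (by positivity), ← Real.sqrt_eq_rpow,
          Real.sqrt_sq (by positivity : (0:ℝ) ≤ u/y)]
        field_simp
  -- derivative
  have hfderiv : ∀ x ∈ Set.Ioo (0:ℝ) 1, HasDerivWithinAt f (f' x) (Set.Ioo (0:ℝ) 1) x := by
    intro x hx
    exact (((Real.hasDerivAt_rpow_const (p := (-(1/2):ℝ)) (Or.inl hx.1.ne'))).const_mul
      u).hasDerivWithinAt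
  -- injective
  have hinj : Set.InjOn f (Set.Ioo (0:ℝ) 1) := by
    intro a ha b hb hab
    have h1 : a ^ (-(1/2):ℝ) = b ^ (-(1/2):ℝ) := mul_left_cancel₀ hu0.ne' hab
    have h2 : (a ^ (-(1/2):ℝ)) ^ ((-2 : ℝ)) = (b ^ (-(1/2):ℝ)) ^ ((-2:ℝ)) := by rw [h1]
    rwa [← Real.rpow_mul ha.1.le, ← Real.rpow_mul hb.1.le, show (-(1/2) : ℝ) * (-2) = 1 by norm_num,
      Real.rpow_one, Real.rpow_one] at h2
  -- key pointwise identity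
  have key : ∀ x ∈ Set.Ioo (0:ℝ) 1, |f' x| * G (f x)
      = (u^e/2) * (x ^ ((η - 1/2) - 1) * (1-x) ^ ((1/2 : ℝ) - 1)) := by
    intro x ⟨hx0, hx1⟩
    have hfx : f x = u * x ^ (-(1/2):ℝ) := rfl
    have hux : u / f x = x ^ ((1/2):ℝ) := by
      rw [hfx, Real.rpow_neg hx0.le]
      field_simp
    have hux2 : (u / f x)^2 = x := by
      rw [hux, ← Real.rpow_natCast (x ^ ((1/2):ℝ)) 2, ← Real.rpow_mul hx0.le]
      norm_num
    have hfxpow : (f x) ^ (e - 2) = u ^ (e-2) * x ^ ((-(1/2)) * (e-2)) := by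
      rw [hfx, Real.mul_rpow hu0.le (by positivity), ← Real.rpow_mul hx0.le]
    have habs : |f' x| = u * (1/2 * x ^ ((-(1/2):ℝ)-1)) := by
      rw [hf', abs_of_nonpos (by simp; positivity)]
      ring_nf
    have hupow : u * (u * u ^ (e-2)) = u ^ e := by
      rw [Real.rpow_sub hu0, show ((2:ℝ)) = ((2:ℕ):ℝ) by norm_num, Real.rpow_natCast]
      field_simp
    have hxpow : x ^ ((-(1/2):ℝ)-1) * x ^ (-(1/2) * (e-2)) = x ^ ((η - 1/2) - 1) := by
      rw [← Real.rpow_add hx0]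
      congr 1
      rw [he]; ring
    have h1mx : ((1:ℝ)-x) ^ (-(1/2):ℝ) = (1-x) ^ ((1/2:ℝ)-1) := by
      congr 1; norm_num
    rw [habs, hG]
    simp only [hux2, hfxpow, h1mx]
    rw [show u * (1/2 * x ^ ((-(1/2):ℝ)-1)) *
          (u * (u ^ (e-2) * x ^ (-(1/2) * (e-2))) * (1-x) ^ ((1/2:ℝ)-1))
        = (u * (u * u ^ (e-2))) * ((x ^ ((-(1/2):ℝ)-1) * x ^ (-(1/2) * (e-2)))
            * (1-x) ^ ((1/2:ℝ)-1)) / 2 by ring,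
      hupow, hxpow]
    ring
  -- value of L
  have hbint := realBetaIntegrable (η - 1/2) (1/2) (by linarith) (by norm_num)
  have hGval : ∫ r in Set.Ioi u, G r
      = (u^e/2) * (Real.Gamma (η - 1/2) * Real.Gamma (1/2) / Real.Gamma η) := by
    rw [← himg, MeasureTheory.integral_image_eq_integral_abs_deriv_smul measurableSet_Ioo
      hfderiv hinj]
    simp only [smul_eq_mul]
    rw [MeasureTheory.setIntegral_congr_fun measurableSet_Ioo (fun x hx => key x hx)]
    rw [MeasureTheory.integral_const_mul, realBetaIoo (η - 1/2) (1/2) (by linarith) (by norm_num)]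
    norm_num
  have hGint : IntegrableOn G (Set.Ioi u) := by
    rw [← himg, MeasureTheory.integrableOn_image_iff_integrableOn_abs_deriv_smul
      measurableSet_Ioo hfderiv hinj]
    simp only [smul_eq_mul]
    exact MeasureTheory.IntegrableOn.congr_fun (hbint.const_mul (u^e/2))
      (fun x hx => (key x hx).symm) measurableSet_Ioo
  -- integration by parts on (u, ∞)
  have he0 : e ≠ 0 := by rw [he]; intro h; nlinarith
  set U : ℝ → ℝ := fun r => π - Real.arccos (u/r) with hUdef
  set U' : ℝ → ℝ := fun r => -(u / (r^2 * Real.sqrt (1 - (u/r)^2))) with hU'def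
  set V : ℝ → ℝ := fun r => r ^ e / e with hVdef
  set V' : ℝ → ℝ := fun r => r ^ (e-1) with hV'def
  have hfacts : ∀ r ∈ Set.Ioi u, 0 < r ∧ 0 < u/r ∧ u/r < 1 ∧ 0 < 1 - (u/r)^2 := by
    intro r hr
    have hr0 : 0 < r := lt_trans hu0 hr
    have h1 : u/r < 1 := (div_lt_one hr0).mpr hr
    have h2 : 0 < u/r := by positivity
    exact ⟨hr0, h2, h1, by nlinarith⟩
  have hU : ∀ r ∈ Set.Ioi u, HasDerivAt U (U' r) r := by
    intro r hr
    obtain ⟨hr0, h2, h1, h3⟩ := hfacts r hr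
    have hd1 : HasDerivAt (fun r : ℝ => u/r) (-(u/r^2)) r := by
      have := (hasDerivAt_inv hr0.ne').const_mul u
      simpa [div_eq_mul_inv, neg_mul, mul_comm] using this
    have hd2 := (Real.hasDerivAt_arccos (by linarith : u/r ≠ -1) h1.ne).comp r hd1
    have hd3 := hd2.const_sub π
    refine hd3.congr_deriv ?_
    have hs : Real.sqrt (1 - (u/r)^2) ≠ 0 := (Real.sqrt_pos.mpr h3).ne'
    rw [hU'def]
    simp only [Function.comp]
    field_simp
  have hV : ∀ r ∈ Set.Ioi u, HasDerivAt V (V' r) r := by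
    intro r hr
    obtain ⟨hr0, -, -, -⟩ := hfacts r hr
    have := (Real.hasDerivAt_rpow_const (p := e) (Or.inl hr0.ne')).div_const e
    refine this.congr_deriv ?_
    rw [hV'def]
    field_simp
  have hUbd : ∀ r ∈ Set.Ioi u, 0 ≤ U r ∧ U r ≤ π := by
    intro r hr
    constructor
    · have := Real.arccos_le_pi (u/r); simp only [hUdef]; linarith
    · have := Real.arccos_nonneg (u/r); simp only [hUdef]; linarith
  have huv' : IntegrableOn (U * V') (Set.Ioi u) := by
    have hbase : IntegrableOn (fun r : ℝ => r ^ (e-1)) (Set.Ioi u) :=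
      integrableOn_Ioi_rpow_of_lt (by rw [he]; linarith) hu0
    refine MeasureTheory.Integrable.mono' (hbase.const_mul π) ?_ ?_
    · have cU : ContinuousOn U (Set.Ioi u) := by
        apply continuousOn_const.sub
        exact Real.continuous_arccos.comp_continuousOn
          (continuousOn_const.div continuousOn_id (fun r hr => (lt_trans hu0 hr).ne'))
      have cV' : ContinuousOn V' (Set.Ioi u) :=
        continuousOn_id.rpow_const (fun r hr => Or.inl (lt_trans hu0 hr).ne')
      exact (cU.mul cV').aestronglyMeasurable measurableSet_Ioi
    · refine (MeasureTheory.ae_restrict_iff' measurableSet_Ioi).mpr (Filter.Eventually.of_forall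
        (fun r hr => ?_))
      obtain ⟨h0, h1⟩ := hUbd r hr
      obtain ⟨hr0, -, -, -⟩ := hfacts r hr
      have hv : |V' r| = r ^ (e-1) := abs_of_pos (Real.rpow_pos_of_pos hr0 _)
      calc ‖(U * V') r‖ = |U r| * |V' r| := by rw [Pi.mul_apply, norm_mul]; rfl
      _ = U r * (r ^ (e-1)) := by rw [abs_of_nonneg h0, hv]
      _ ≤ π * r ^ (e-1) := by
          apply mul_le_mul_of_nonneg_right h1 (Real.rpow_pos_of_pos hr0 _).le
  have hEq : Set.EqOn (fun r => (-(1/e)) * G r) (U' * V) (Set.Ioi u) := by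
    intro r hr
    obtain ⟨hr0, h2, h1, h3⟩ := hfacts r hr
    have hs : Real.sqrt (1 - (u/r)^2) ≠ 0 := (Real.sqrt_pos.mpr h3).ne'
    have hrp : (1 - (u/r)^2) ^ (-(1/2):ℝ) = (Real.sqrt (1 - (u/r)^2))⁻¹ := by
      rw [Real.rpow_neg h3.le, ← Real.sqrt_eq_rpow]
    have hre : r ^ (e-2) = r ^ e / r^2 := by
      rw [Real.rpow_sub hr0, show ((2:ℝ)) = ((2:ℕ):ℝ) by norm_num, Real.rpow_natCast]
    show (-(1/e)) * G r = U' r * V r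
    rw [hG, hU'def, hVdef]
    simp only
    rw [hrp, hre]
    clear_value f f' G U U' V V'
    clear hf hf' hG hUdef hU'def hVdef hV'def hfderiv hinj key hGval hGint himg hbint hfacts hUbd huv'
    field_simp
  have hu'v : IntegrableOn (U' * V) (Set.Ioi u) :=
    MeasureTheory.IntegrableOn.congr_fun (hGint.const_mul (-(1/e))) hEq measurableSet_Ioi
  have h_zero : Filter.Tendsto (U * V) (nhdsWithin u (Set.Ioi u)) (nhds (π * (u^e/e))) := by
    have c1 : ContinuousAt U u := by
      apply ContinuousAt.sub continuousAt_const
      exact Real.continuous_arccos.continuousAt.comp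
        (ContinuousAt.div continuousAt_const continuousAt_id hu0.ne')
    have c2 : ContinuousAt V u :=
      (Real.continuousAt_rpow_const u e (Or.inl hu0.ne')).div_const e
    have : Filter.Tendsto (U * V) (nhdsWithin u (Set.Ioi u)) (nhds (U u * V u)) :=
      ((c1.mul c2).tendsto).mono_left nhdsWithin_le_nhds
    have hval : U u * V u = π * (u^e/e) := by
      simp only [hUdef, hVdef, div_self hu0.ne', Real.arccos_one]
      ring
    rwa [show (U * V) = fun r => U r * V r from rfl, hval] at this
  have h_infty : Filter.Tendsto (U * V) Filter.atTop (nhds 0) := by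
    have tdiv : Filter.Tendsto (fun r : ℝ => u/r) Filter.atTop (nhds 0) := by
      simpa [div_eq_mul_inv] using tendsto_inv_atTop_zero.const_mul u
    have tU : Filter.Tendsto U Filter.atTop (nhds (π - Real.arccos 0)) :=
      Filter.Tendsto.const_sub π ((Real.continuous_arccos.tendsto 0).comp tdiv)
    have tV : Filter.Tendsto V Filter.atTop (nhds 0) := by
      have h := tendsto_rpow_neg_atTop (by linarith : (0:ℝ) < 2*η - 2)
      have h2 : Filter.Tendsto (fun r : ℝ => r ^ e) Filter.atTop (nhds 0) := by
        convert h using 2 with r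
        rw [he]; ring_nf
      simpa using h2.div_const e
    have := tU.mul tV
    rw [mul_zero] at this
    exact this
  have parts := MeasureTheory.integral_Ioi_mul_deriv_eq_deriv_mul hU hV huv' hu'v h_zero h_infty
  have hU'Vval : ∫ r in Set.Ioi u, U' r * V r = -(1/e) * ∫ r in Set.Ioi u, G r := by
    rw [← MeasureTheory.integral_const_mul]
    exact (MeasureTheory.setIntegral_congr_fun measurableSet_Ioi hEq).symm
  have hP3 : ∫ r in Set.Ioi u, U r * V' r
      = 0 - π * (u^e/e) - (-(1/e) * ((u^e/2)
          * (Real.Gamma (η - 1/2) * Real.Gamma (1/2) / Real.Gamma η))) := by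
    rw [parts, hU'Vval, hGval]
  -- the full integrand after evaluating the inner integral
  set F : ℝ → ℝ := fun r =>
    (if r ≤ u then π else π - Real.arccos (u/r)) * ((min 1 (r ^ (-η)))^2 * r) with hFdef
  have step1 : Set.EqOn (fun r => ∫ _φ in Set.Ioo (0:ℝ)
        (if r ≤ u then π else π - Real.arccos (u / r)), (min 1 (r ^ (-η)))^2 * r)
      F (Set.Ioi 0) := by
    intro r _
    simp only [hFdef]
    rw [MeasureTheory.setIntegral_const, Real.volume_real_Ioo, smul_eq_mul, sub_zero,
      max_eq_left]
    split_ifs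
    · positivity
    · have := Real.arccos_le_pi (u/r); linarith
  -- pointwise descriptions on the three pieces
  have E1 : Set.EqOn (fun r : ℝ => π * r) F (Set.Ioc 0 1) := by
    intro r hr
    simp only [hFdef]
    rw [if_pos (hr.2.trans hu),
      min_eq_left (Real.one_le_rpow_of_pos_of_le_one_of_nonpos hr.1 hr.2 (by linarith))]
    ring
  have hpow : ∀ r : ℝ, 0 < r → (min 1 (r ^ (-η)))^2 * r = r ^ (e-1) → True := fun _ _ _ => trivial
  have hpow2 : ∀ r : ℝ, 0 < r → 1 ≤ r → (min 1 (r ^ (-η)))^2 * r = r ^ (e-1) := by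
    intro r hr0 hr1
    rw [min_eq_right (Real.rpow_le_one_of_one_le_of_nonpos hr1 (by linarith)),
      ← Real.rpow_natCast (r ^ (-η)) 2, ← Real.rpow_mul hr0.le,
      ← Real.rpow_add_one hr0.ne']
    congr 1
    rw [he]; push_cast; ring
  have E2 : Set.EqOn (fun r : ℝ => π * r ^ (e-1)) F (Set.Ioc 1 u) := by
    intro r hr
    have hr0 : (0:ℝ) < r := lt_trans one_pos hr.1
    simp only [hFdef]
    rw [if_pos hr.2, hpow2 r hr0 hr.1.le]
  have E3 : Set.EqOn (fun r => U r * V' r) F (Set.Ioi u) := by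
    intro r hr
    have hr0 : (0:ℝ) < r := lt_trans hu0 hr
    simp only [hFdef, hUdef, hV'def]
    rw [if_neg (not_le.mpr hr), hpow2 r hr0 (hu.trans hr.le)]
  -- integrability on the three pieces
  have I1 : IntegrableOn F (Set.Ioc 0 1) :=
    MeasureTheory.IntegrableOn.congr_fun
      ((continuous_const.mul continuous_id).integrableOn_Ioc) E1 measurableSet_Ioc
  have I2 : IntegrableOn F (Set.Ioc 1 u) := by
    refine MeasureTheory.IntegrableOn.congr_fun ?_ E2 measurableSet_Ioc
    refine (MeasureTheory.IntegrableOn.mono_set ?_ Set.Ioc_subset_Icc_self)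
    apply ContinuousOn.integrableOn_Icc
    apply continuousOn_const.mul
    exact continuousOn_id.rpow_const (fun r hr => Or.inl (by
      simp only [id_eq]; rcases hr with ⟨h1, _⟩; intro h; rw [h] at h1; linarith))
  have I3 : IntegrableOn F (Set.Ioi u) :=
    MeasureTheory.IntegrableOn.congr_fun huv' (fun r hr => E3 hr) measurableSet_Ioi
  -- values on the three pieces
  have V1 : ∫ r in Set.Ioc (0:ℝ) 1, F r = π / 2 := by
    rw [← MeasureTheory.setIntegral_congr_fun measurableSet_Ioc E1,
      ← intervalIntegral.integral_of_le (by norm_num : (0:ℝ) ≤ 1),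
      intervalIntegral.integral_const_mul, integral_id]
    ring
  have V2 : ∫ r in Set.Ioc (1:ℝ) u, F r = π * ((u ^ e - 1)/e) := by
    rw [← MeasureTheory.setIntegral_congr_fun measurableSet_Ioc E2,
      ← intervalIntegral.integral_of_le hu,
      intervalIntegral.integral_const_mul,
      integral_rpow (Or.inr ⟨by rw [he]; intro h; nlinarith, by
        rw [Set.uIcc_of_le hu]; intro h; rcases h with ⟨h1, _⟩; linarith⟩)]
    rw [show e - 1 + 1 = e by ring, Real.one_rpow]
  have V3 : ∫ r in Set.Ioi u, F r
      = 0 - π * (u^e/e) - (-(1/e) * ((u^e/2)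
          * (Real.Gamma (η - 1/2) * Real.Gamma (1/2) / Real.Gamma η))) := by
    rw [← MeasureTheory.setIntegral_congr_fun measurableSet_Ioi E3, hP3]
  -- split the domain
  have hsplit : ∫ r in Set.Ioi (0:ℝ), F r
      = (∫ r in Set.Ioc (0:ℝ) 1, F r) + (∫ r in Set.Ioc (1:ℝ) u, F r)
        + ∫ r in Set.Ioi u, F r := by
    rw [← Set.Ioc_union_Ioi_eq_Ioi (le_trans zero_le_one hu),
      MeasureTheory.setIntegral_union (Set.Ioc_disjoint_Ioi le_rfl) measurableSet_Ioi
        (by rw [← Set.Ioc_union_Ioc_eq_Ioc (by norm_num : (0:ℝ) ≤ 1) hu]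
            exact I1.union I2) I3,
      ← Set.Ioc_union_Ioc_eq_Ioc (by norm_num : (0:ℝ) ≤ 1) hu,
      MeasureTheory.setIntegral_union (Set.Ioc_disjoint_Ioc_of_le le_rfl) measurableSet_Ioc I1 I2]
  -- put everything together
  rw [MeasureTheory.setIntegral_congr_fun measurableSet_Ioi step1, hsplit, V1, V2, V3]
  rw [Real.Gamma_one_half_eq, he]
  have hg : (0:ℝ) < Real.Gamma η := Real.Gamma_pos_of_pos (by linarith)
  have halg : π / 2 + π * ((u ^ ((2:ℝ)-2*η) - 1)/(2-2*η)) +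
      (0 - π * (u ^ ((2:ℝ)-2*η)/(2-2*η)) - (-(1/(2-2*η)) * ((u ^ ((2:ℝ)-2*η)/2)
          * (Real.Gamma (η - 1/2) * Real.sqrt π / Real.Gamma η))))
      = (2 * π * η * Real.Gamma η - u ^ (2 - 2 * η) * Real.sqrt π * Real.Gamma (η - 1/2))
          / (4 * Real.Gamma η * (η - 1)) := by
    have h2e : (2:ℝ) - 2*η ≠ 0 := by intro h; nlinarith
    have h1 : η - 1 ≠ 0 := by intro h; nlinarith
    have h1' : 1 - η ≠ 0 := by intro h; nlinarith
    generalize u ^ ((2:ℝ)-2*η) = w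
    field_simp
    ring
  rw [halg, mul_div_assoc]
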